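/- Let (E, σ, τ, ε) be a signed chord diagram, p : E, s : Bool, and let (E', σ', τ', ε') be the first-Reidemeister-move insertion at p with sign s on the new chord. Then in ℤ[A, A⁻¹]: if s = true (positive kink) then ⟨E', σ', τ', ε'⟩ = (−A³) · ⟨E, σ, τ, ε⟩, and if s = false (negative kink) then ⟨E', σ', τ', ε'⟩ = (−A⁻³) · ⟨E, σ, τ, ε⟩. (Under the positive, respectively negative, first Reidemeister move the Kauffman bracket of a signed chord diagram is multiplied by −A³, respectively −A⁻³, exactly as in the classical case.) -/

import Mathlib

open LaurentPolynomial

/-- The involution `α` on `E × Bool` matching the two ends of each base arc: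
`α (x, false) = (σ x, true)` and `α (x, true) = (σ⁻¹ x, false)`. -/
def alphaPerm {E : Type*} (σ : Equiv.Perm E) : Equiv.Perm (E × Bool) :=
  Function.Involutive.toPerm
    (fun p => if p.2 then (σ⁻¹ p.1, false) else (σ p.1, true))
    (by rintro ⟨x, _ | _⟩ <;> simp)

/-- The involution `μ_m` on `E × Bool` defined by a state `m` of a signed chord
diagram: it sends `(x, true) ↦ (τ x, false)` and `(x, false) ↦ (τ x, true)` when
`m x = ε x`, and `(x, true) ↦ (τ x, true)`, `(x, false) ↦ (τ x, false)` otherwise. -/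
def muPerm {E : Type*} (τ : Equiv.Perm E) (ε m : E → Bool)
    (hτ : ∀ x, τ (τ x) = x) (hε : ∀ x, ε (τ x) = ε x) (hm : ∀ x, m (τ x) = m x) :
    Equiv.Perm (E × Bool) :=
  Function.Involutive.toPerm
    (fun p => (τ p.1, if m p.1 = ε p.1 then !p.2 else p.2))
    (by rintro ⟨x, b⟩; by_cases h : m x = ε x <;> simp [h, hτ, hε, hm])

/-- `|m|`: the number of orbits on `E × Bool` of the subgroup of `Equiv.Perm (E × Bool)`
generated by `α` and `μ_m`, i.e. the number of components of the smoothing of the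
signed chord diagram along the state `m`. -/
noncomputable def numComponents {E : Type*} [Fintype E] [DecidableEq E]
    (σ τ : Equiv.Perm E) (ε m : E → Bool)
    (hτ : ∀ x, τ (τ x) = x) (hε : ∀ x, ε (τ x) = ε x) (hm : ∀ x, m (τ x) = m x) : ℕ :=
  Nat.card (MulAction.orbitRel.Quotient
    (Subgroup.closure {alphaPerm σ, muPerm τ ε m hτ hε hm} : Subgroup (Equiv.Perm (E × Bool)))
    (E × Bool))

/-- `a(m)`: the number of chords (orbits of `τ`) on which the `τ`-invariant map `m`
takes the value `true` (each such chord contributes its two endpoints). -/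
def aCount {E : Type*} [Fintype E] [DecidableEq E] (m : E → Bool) : ℕ :=
  (Finset.univ.filter fun x => m x = true).card / 2

/-- `b(m)`: the number of chords (orbits of `τ`) on which the `τ`-invariant map `m`
takes the value `false`. -/
def bCount {E : Type*} [Fintype E] [DecidableEq E] (m : E → Bool) : ℕ :=
  (Finset.univ.filter fun x => m x = false).card / 2

/-- The Kauffman bracket of a signed chord diagram `(E, σ, τ, ε)`:
`⟨E, σ, τ, ε⟩ = Σ_m A^(a(m) − b(m)) · (−A² − A⁻²)^|m|` in `ℤ[A, A⁻¹]`,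
the sum running over all states `m`. -/
noncomputable def kauffman {E : Type*} [Fintype E] [DecidableEq E]
    (σ τ : Equiv.Perm E) (ε : E → Bool)
    (hτ : ∀ x, τ (τ x) = x) (hε : ∀ x, ε (τ x) = ε x) : LaurentPolynomial ℤ :=
  ∑ m : {m : E → Bool // ∀ x, m (τ x) = m x},
    T ((aCount m.1 : ℤ) - (bCount m.1 : ℤ)) *
      (-(T 2) - T (-2)) ^ (numComponents σ τ ε m.1 hτ hε m.2)

theorem Equiv.Perm.apply_inv_self {α : Type*} (f : Equiv.Perm α) (x : α) : f (f⁻¹ x) = x :=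
  f.apply_symm_apply x

theorem Equiv.Perm.inv_apply_self {α : Type*} (f : Equiv.Perm α) (x : α) : f⁻¹ (f x) = x :=
  f.symm_apply_apply x

private lemma quot_card_eq {X : Type*} (a b : Equiv.Perm X) :
    Nat.card (MulAction.orbitRel.Quotient
      (Subgroup.closure {a, b} : Subgroup (Equiv.Perm X)) X) =
    Nat.card (Quot (fun x y : X => a x = y ∨ b x = y)) := by
  set r : X → X → Prop := fun x y => a x = y ∨ b x = y with hr
  have ha : a ∈ Subgroup.closure ({a, b} : Set (Equiv.Perm X)) :=
    Subgroup.subset_closure (Set.mem_insert _ _)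
  have hb : b ∈ Subgroup.closure ({a, b} : Set (Equiv.Perm X)) :=
    Subgroup.subset_closure (Set.mem_insert_of_mem _ rfl)
  have key : ∀ g ∈ Subgroup.closure ({a, b} : Set (Equiv.Perm X)), ∀ x : X,
      Quot.mk r (g x) = Quot.mk r x := by
    intro g hg
    induction hg using Subgroup.closure_induction with
    | mem g hg =>
        intro x
        rcases hg with rfl | rfl
        · exact (Quot.sound (show r x (g x) from Or.inl rfl)).symm
        · exact (Quot.sound (show r x (g x) from Or.inr rfl)).symm
    | one => intro x; rfl
    | mul g h _ _ ihg ihh =>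
        intro x
        rw [Equiv.Perm.mul_apply, ihg, ihh]
    | inv g _ ih =>
        intro x
        have := ih (g⁻¹ x)
        rw [Equiv.Perm.apply_inv_self] at this
        exact this.symm
  refine Nat.card_congr ⟨Quotient.lift (Quot.mk r) ?_, Quot.lift (Quotient.mk _) ?_, ?_, ?_⟩
  · intro x y hxy
    obtain ⟨⟨g, hg⟩, rfl⟩ := MulAction.orbitRel_apply.mp hxy
    exact key g hg y
  · intro x y hxy
    apply Quotient.sound
    rcases hxy with rfl | rfl
    · refine MulAction.orbitRel_apply.mpr ⟨(⟨a, ha⟩ : Subgroup.closure ({a,b} : Set (Equiv.Perm X)))⁻¹, ?_⟩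
      show (a⁻¹ : Equiv.Perm X) • (a x) = x
      simp
    · refine MulAction.orbitRel_apply.mpr ⟨(⟨b, hb⟩ : Subgroup.closure ({a,b} : Set (Equiv.Perm X)))⁻¹, ?_⟩
      show (b⁻¹ : Equiv.Perm X) • (b x) = x
      simp
  · intro q; induction q using Quotient.ind; rfl
  · intro q; induction q using Quot.ind; rfl

private def mergeMap {E : Type*} (R : E × Bool → E × Bool → Prop) (p : E) :
    (E ⊕ Fin 2) × Bool → Quot R
  | (Sum.inl x, b) => Quot.mk R (x, b)
  | (Sum.inr _, _) => Quot.mk R (p, false)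

@[simp] private lemma mergeMap_inl {E : Type*} (R : E × Bool → E × Bool → Prop) (p : E)
    (x : E) (b : Bool) : mergeMap R p (Sum.inl x, b) = Quot.mk R (x, b) := rfl

@[simp] private lemma mergeMap_inr {E : Type*} (R : E × Bool → E × Bool → Prop) (p : E)
    (i : Fin 2) (b : Bool) : mergeMap R p (Sum.inr i, b) = Quot.mk R (p, false) := rfl

private def splitMap {E : Type*} (R : E × Bool → E × Bool → Prop) (p : E) :
    (E ⊕ Fin 2) × Bool → Option (Quot R)
  | (Sum.inl x, b) => some (Quot.mk R (x, b))
  | (Sum.inr i, b) => if (i = 0) ↔ (b = true) then some (Quot.mk R (p, false)) else none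

@[simp] private lemma splitMap_inl {E : Type*} (R : E × Bool → E × Bool → Prop) (p : E)
    (x : E) (b : Bool) : splitMap R p (Sum.inl x, b) = some (Quot.mk R (x, b)) := rfl

@[simp] private lemma splitMap_inr {E : Type*} (R : E × Bool → E × Bool → Prop) (p : E)
    (i : Fin 2) (b : Bool) : splitMap R p (Sum.inr i, b) =
      if (i = 0) ↔ (b = true) then some (Quot.mk R (p, false)) else none := rfl

private def inclMap {E : Type*} (R' : (E ⊕ Fin 2) × Bool → (E ⊕ Fin 2) × Bool → Prop) :
    E × Bool → Quot R' := fun z => Quot.mk R' (Sum.inl z.1, z.2)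

@[simp] private lemma inclMap_apply {E : Type*}
    (R' : (E ⊕ Fin 2) × Bool → (E ⊕ Fin 2) × Bool → Prop) (x : E) (b : Bool) :
    inclMap R' (x, b) = Quot.mk R' (Sum.inl x, b) := rfl
private lemma nat_card_option {α : Type*} [Finite α] :
    Nat.card (Option α) = Nat.card α + 1 := by
  rw [Nat.card_congr (Equiv.optionEquivSumPUnit.{0} α), Nat.card_sum]
  simp

private lemma comp_insert
    {E : Type*} [Fintype E] [DecidableEq E]
    (σ τ : Equiv.Perm E) (ε : E → Bool)
    (hτ : ∀ x : E, τ (τ x) = x)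
    (hε : ∀ x : E, ε (τ x) = ε x)
    (p : E) (s : Bool)
    (σ' τ' : Equiv.Perm (E ⊕ Fin 2)) (ε' : E ⊕ Fin 2 → Bool)
    (hσp : σ' (Sum.inl p) = Sum.inr 0)
    (hσ0 : σ' (Sum.inr 0) = Sum.inr 1)
    (hσ1 : σ' (Sum.inr 1) = Sum.inl (σ p))
    (hσz : ∀ z : E, z ≠ p → σ' (Sum.inl z) = Sum.inl (σ z))
    (hτ0 : τ' (Sum.inr 0) = Sum.inr 1)
    (hτ1 : τ' (Sum.inr 1) = Sum.inr 0)
    (hτz : ∀ z : E, τ' (Sum.inl z) = Sum.inl (τ z))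
    (hτ' : ∀ x : E ⊕ Fin 2, τ' (τ' x) = x)
    (hε'z : ∀ z : E, ε' (Sum.inl z) = ε z)
    (hε'new : ∀ i : Fin 2, ε' (Sum.inr i) = s)
    (hε' : ∀ x : E ⊕ Fin 2, ε' (τ' x) = ε' x)
    (m : E → Bool) (hm : ∀ x, m (τ x) = m x) (c : Bool)
    (hm' : ∀ x, Sum.elim m (fun _ => c) (τ' x) = Sum.elim m (fun _ => c) x) :
    numComponents σ' τ' ε' (Sum.elim m fun _ => c) hτ' hε' hm' =
      numComponents σ τ ε m hτ hε hm + (if c = s then 1 else 0) := by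
  unfold numComponents
  rw [quot_card_eq, quot_card_eq]
  set R : E × Bool → E × Bool → Prop :=
    fun x y => alphaPerm σ x = y ∨ muPerm τ ε m hτ hε hm x = y with hR
  set R' : (E ⊕ Fin 2) × Bool → (E ⊕ Fin 2) × Bool → Prop :=
    fun x y => alphaPerm σ' x = y ∨
      muPerm τ' ε' (Sum.elim m fun _ => c) hτ' hε' hm' x = y with hR'
  -- application lemmas
  have hA1 : ∀ x : E, alphaPerm σ (x, false) = (σ x, true) := by
    intro x; simp [alphaPerm]
  have hA2 : ∀ x : E, alphaPerm σ (x, true) = (σ⁻¹ x, false) := by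
    intro x; simp [alphaPerm]
  have hA'f : ∀ u, alphaPerm σ' (u, false) = (σ' u, true) := by
    intro u; simp [alphaPerm]
  have hA't : ∀ u, alphaPerm σ' (u, true) = (σ'⁻¹ u, false) := by
    intro u; simp [alphaPerm]
  have hMapp : ∀ (x : E) (b : Bool), muPerm τ ε m hτ hε hm (x, b) =
      (τ x, if m x = ε x then !b else b) := by
    intro x b; rfl
  have hM'inl : ∀ (x : E) (b : Bool),
      muPerm τ' ε' (Sum.elim m fun _ => c) hτ' hε' hm' (Sum.inl x, b) =
      (Sum.inl (τ x), if m x = ε x then !b else b) := by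
    intro x b
    show (τ' (Sum.inl x), if Sum.elim m (fun _ => c) (Sum.inl x) = ε' (Sum.inl x) then !b else b) = _
    simp [hτz, hε'z]
  have hM'inr : ∀ (i : Fin 2) (b : Bool),
      muPerm τ' ε' (Sum.elim m fun _ => c) hτ' hε' hm' (Sum.inr i, b) =
      (τ' (Sum.inr i), if c = s then !b else b) := by
    intro i b
    show (τ' (Sum.inr i), if Sum.elim m (fun _ => c) (Sum.inr i) = ε' (Sum.inr i) then !b else b) = _
    simp [hε'new]
  -- inverse computations for σ'
  have hinv0 : σ'⁻¹ (Sum.inr 0) = Sum.inl p := by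
    rw [← hσp, Equiv.Perm.inv_apply_self]
  have hinv1 : σ'⁻¹ (Sum.inr 1) = Sum.inr 0 := by
    rw [← hσ0, Equiv.Perm.inv_apply_self]
  have hinvσp : σ'⁻¹ (Sum.inl (σ p)) = Sum.inr 1 := by
    rw [← hσ1, Equiv.Perm.inv_apply_self]
  have hinvz : ∀ z : E, z ≠ σ p → σ'⁻¹ (Sum.inl z) = Sum.inl (σ⁻¹ z) := by
    intro z hz
    have h1 : σ⁻¹ z ≠ p := fun h => hz (by rw [← h, Equiv.Perm.apply_inv_self])
    have : σ' (Sum.inl (σ⁻¹ z)) = Sum.inl z := by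
      rw [hσz _ h1, Equiv.Perm.apply_inv_self]
    rw [← this, Equiv.Perm.inv_apply_self]
  -- mk-level edges
  have mkRA : ∀ x : E, Quot.mk R (x, false) = Quot.mk R (σ x, true) :=
    fun x => Quot.sound (Or.inl (hA1 x))
  have mkRM : ∀ (x : E) (b : Bool),
      Quot.mk R (x, b) = Quot.mk R (τ x, if m x = ε x then !b else b) :=
    fun x b => Quot.sound (Or.inr (hMapp x b))
  have mk'Af : ∀ u, Quot.mk R' (u, false) = Quot.mk R' (σ' u, true) :=
    fun u => Quot.sound (Or.inl (hA'f u))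
  have mk'At : ∀ u, Quot.mk R' (u, true) = Quot.mk R' (σ'⁻¹ u, false) :=
    fun u => Quot.sound (Or.inl (hA't u))
  have mk'Minl : ∀ (x : E) (b : Bool), Quot.mk R' (Sum.inl x, b) =
      Quot.mk R' (Sum.inl (τ x), if m x = ε x then !b else b) :=
    fun x b => Quot.sound (Or.inr (hM'inl x b))
  have mk'Minr : ∀ (i : Fin 2) (b : Bool), Quot.mk R' (Sum.inr i, b) =
      Quot.mk R' (τ' (Sum.inr i), if c = s then !b else b) :=
    fun i b => Quot.sound (Or.inr (hM'inr i b))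
  -- chain pieces
  have e1 : Quot.mk R' (Sum.inl p, false) = Quot.mk R' (Sum.inr 0, true) := by
    have := mk'Af (Sum.inl p); rwa [hσp] at this
  have e4 : Quot.mk R' (Sum.inr 1, false) = Quot.mk R' (Sum.inl (σ p), true) := by
    have := mk'Af (Sum.inr 1); rwa [hσ1] at this
  by_cases hcs : c = s
  · -- split case: new circle
    rw [if_pos hcs]
    have eM : ∀ (i : Fin 2) (b : Bool), Quot.mk R' (Sum.inr i, b) =
        Quot.mk R' (τ' (Sum.inr i), !b) := by
      intro i b; have := mk'Minr i b; rwa [if_pos hcs] at this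
    have eM0 : ∀ b, Quot.mk R' (Sum.inr 0, b) = Quot.mk R' (Sum.inr 1, !b) := by
      intro b; have := eM 0 b; rwa [hτ0] at this
    have eM1 : ∀ b, Quot.mk R' (Sum.inr 1, b) = Quot.mk R' (Sum.inr 0, !b) := by
      intro b; have := eM 1 b; rwa [hτ1] at this
    have keyP : ∀ x : E, Quot.mk R' (Sum.inl x, false) = Quot.mk R' (Sum.inl (σ x), true) := by
      intro x
      by_cases hx : x = p
      · subst hx
        exact (e1.trans (eM0 true)).trans e4
      · have := mk'Af (Sum.inl x); rwa [hσz x hx] at this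
    have kcond : ∀ z w : E × Bool, R z w → inclMap R' z = inclMap R' w := by
      rintro ⟨x, b⟩ w (rfl | rfl)
      · cases b
        · rw [hA1 x]; simpa using keyP x
        · rw [hA2 x]
          have := keyP (σ⁻¹ x)
          rw [Equiv.Perm.apply_inv_self] at this
          simpa using this.symm
      · rw [hMapp x b]; simpa using mk'Minl x b
    have gcond : ∀ z w, R' z w → splitMap R p z = splitMap R p w := by
      rintro ⟨u, b⟩ w (rfl | rfl)
      · cases u with
        | inl x =>
          cases b
          · rw [hA'f]
            by_cases hx : x = p
            · subst hx; rw [hσp]; simp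
            · rw [hσz x hx]
              simpa using congrArg some (mkRA x)
          · rw [hA't]
            by_cases hx : x = σ p
            · subst hx; rw [hinvσp]
              simpa using congrArg some (mkRA p).symm
            · rw [hinvz x hx]
              have := mkRA (σ⁻¹ x)
              rw [Equiv.Perm.apply_inv_self] at this
              simpa using congrArg some this.symm
        | inr i =>
          fin_cases i <;> simp only [Fin.zero_eta, Fin.mk_one] <;> cases b
          · rw [hA'f, hσ0]; simp
          · rw [hA't, hinv0]; simp
          · rw [hA'f, hσ1]
            simpa using congrArg some (mkRA p)
          · rw [hA't, hinv1]; simp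
      · cases u with
        | inl x =>
          rw [hM'inl]
          by_cases hmx : m x = ε x <;> simp [hmx, mkRM x b, ← mkRM x b]
        | inr i =>
          rw [hM'inr, if_pos hcs]
          fin_cases i <;> simp only [Fin.zero_eta, Fin.mk_one] <;> cases b
          · rw [hτ0]; simp
          · rw [hτ0]; simp
          · rw [hτ1]; simp
          · rw [hτ1]; simp
    have equ : Quot R' ≃ Option (Quot R) := by
      refine ⟨Quot.lift (splitMap R p) (fun z w h => gcond z w h),
        fun o => Option.elim o (Quot.mk R' (Sum.inr 0, false))
          (Quot.lift (inclMap R') (fun z w h => kcond z w h)), ?_, ?_⟩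
      · intro q
        induction q using Quot.ind with
        | _ z =>
          obtain ⟨u, b⟩ := z
          cases u with
          | inl x => rfl
          | inr i =>
            fin_cases i <;> simp only [Fin.zero_eta, Fin.mk_one] <;> cases b
            · rfl
            · show Quot.mk R' (Sum.inl p, false) = Quot.mk R' (Sum.inr 0, true)
              exact e1
            · show Quot.mk R' (Sum.inl p, false) = Quot.mk R' (Sum.inr 1, false)
              exact e1.trans (eM0 true)
            · show Quot.mk R' (Sum.inr 0, false) = Quot.mk R' (Sum.inr 1, true)
              exact eM0 false
      · intro o
        cases o with
        | none => simp [splitMap]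
        | some q =>
          induction q using Quot.ind with
          | _ z => rfl
    rw [Nat.card_congr equ, nat_card_option]
  · -- merge case
    rw [if_neg hcs, add_zero]
    have eM : ∀ (i : Fin 2) (b : Bool), Quot.mk R' (Sum.inr i, b) =
        Quot.mk R' (τ' (Sum.inr i), b) := by
      intro i b; have := mk'Minr i b; rwa [if_neg hcs] at this
    have eM0 : ∀ b, Quot.mk R' (Sum.inr 0, b) = Quot.mk R' (Sum.inr 1, b) := by
      intro b; have := eM 0 b; rwa [hτ0] at this
    have e3 : Quot.mk R' (Sum.inr 1, true) = Quot.mk R' (Sum.inr 0, false) := by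
      have := mk'At (Sum.inr 1); rwa [hinv1] at this
    have keyP : ∀ x : E, Quot.mk R' (Sum.inl x, false) = Quot.mk R' (Sum.inl (σ x), true) := by
      intro x
      by_cases hx : x = p
      · subst hx
        exact ((((e1.trans (eM0 true)).trans e3).trans (eM0 false)).trans e4)
      · have := mk'Af (Sum.inl x); rwa [hσz x hx] at this
    have kcond : ∀ z w : E × Bool, R z w → inclMap R' z = inclMap R' w := by
      rintro ⟨x, b⟩ w (rfl | rfl)
      · cases b
        · rw [hA1 x]; simpa using keyP x
        · rw [hA2 x]
          have := keyP (σ⁻¹ x)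
          rw [Equiv.Perm.apply_inv_self] at this
          simpa using this.symm
      · rw [hMapp x b]; simpa using mk'Minl x b
    have gcond : ∀ z w, R' z w → mergeMap R p z = mergeMap R p w := by
      rintro ⟨u, b⟩ w (rfl | rfl)
      · cases u with
        | inl x =>
          cases b
          · rw [hA'f]
            by_cases hx : x = p
            · subst hx; rw [hσp]; simp
            · rw [hσz x hx]; simpa using mkRA x
          · rw [hA't]
            by_cases hx : x = σ p
            · subst hx; rw [hinvσp]; simpa using (mkRA p).symm
            · rw [hinvz x hx]
              have := mkRA (σ⁻¹ x)
              rw [Equiv.Perm.apply_inv_self] at this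
              simpa using this.symm
        | inr i =>
          fin_cases i <;> simp only [Fin.zero_eta, Fin.mk_one] <;> cases b
          · rw [hA'f, hσ0]; simp
          · rw [hA't, hinv0]; simp
          · rw [hA'f, hσ1]; simpa using mkRA p
          · rw [hA't, hinv1]; simp
      · cases u with
        | inl x =>
          rw [hM'inl]
          simpa using mkRM x b
        | inr i =>
          rw [hM'inr, if_neg hcs]
          fin_cases i <;> simp only [Fin.zero_eta, Fin.mk_one] <;> cases b <;> [rw [hτ0]; rw [hτ0]; rw [hτ1]; rw [hτ1]] <;> simp
    have equ : Quot R' ≃ Quot R := by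
      refine ⟨Quot.lift (mergeMap R p) (fun z w h => gcond z w h),
        Quot.lift (inclMap R') (fun z w h => kcond z w h), ?_, ?_⟩
      · intro q
        induction q using Quot.ind with
        | _ z =>
          obtain ⟨u, b⟩ := z
          cases u with
          | inl x => rfl
          | inr i =>
            fin_cases i <;> simp only [Fin.zero_eta, Fin.mk_one] <;> cases b
            · show Quot.mk R' (Sum.inl p, false) = Quot.mk R' (Sum.inr 0, false)
              exact (e1.trans (eM0 true)).trans e3
            · show Quot.mk R' (Sum.inl p, false) = Quot.mk R' (Sum.inr 0, true)
              exact e1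
            · show Quot.mk R' (Sum.inl p, false) = Quot.mk R' (Sum.inr 1, false)
              exact ((e1.trans (eM0 true)).trans e3).trans (eM0 false)
            · show Quot.mk R' (Sum.inl p, false) = Quot.mk R' (Sum.inr 1, true)
              exact e1.trans (eM0 true)
      · intro q
        induction q using Quot.ind with
        | _ z => rfl
    rw [Nat.card_congr equ]
private lemma aCount_elim {E : Type*} [Fintype E] [DecidableEq E] (m : E → Bool) (c : Bool) :
    aCount (Sum.elim m fun _ : Fin 2 => c) = aCount m + if c then 1 else 0 := by
  unfold aCount
  rw [Finset.card_filter, Fintype.sum_sum_type, ← Finset.card_filter]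
  simp only [Sum.elim_inl, Sum.elim_inr]
  cases c
  · simp
    congr
  · simp only [if_pos rfl]
    norm_num
    congr
private lemma bCount_elim {E : Type*} [Fintype E] [DecidableEq E] (m : E → Bool) (c : Bool) :
    bCount (Sum.elim m fun _ : Fin 2 => c) = bCount m + if c then 0 else 1 := by
  unfold bCount
  rw [Finset.card_filter, Fintype.sum_sum_type, ← Finset.card_filter]
  simp only [Sum.elim_inl, Sum.elim_inr]
  cases c
  · simp only [if_pos rfl]
    norm_num
    congr
  · simp
    congr
private lemma bracket_factor_pos :
    T (1:ℤ) * (-(T 2) - T (-2)) + T (-1) = (-(T 3) : LaurentPolynomial ℤ) := by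
  rw [mul_sub, mul_neg, ← T_add, ← T_add]
  norm_num
private lemma bracket_factor_neg :
    T (-1:ℤ) * (-(T 2) - T (-2)) + T 1 = (-(T (-3)) : LaurentPolynomial ℤ) := by
  rw [mul_sub, mul_neg, ← T_add, ← T_add]
  norm_num
  ring

theorem kauffman_firstReidemeisterMove
    {E : Type*} [Fintype E] [DecidableEq E]
    (σ τ : Equiv.Perm E) (ε : E → Bool)
    (hτ : ∀ x : E, τ (τ x) = x) (hτfix : ∀ x : E, τ x ≠ x)
    (hε : ∀ x : E, ε (τ x) = ε x)
    (p : E) (s : Bool)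
    (σ' τ' : Equiv.Perm (E ⊕ Fin 2)) (ε' : E ⊕ Fin 2 → Bool)
    (hσp : σ' (Sum.inl p) = Sum.inr 0)
    (hσ0 : σ' (Sum.inr 0) = Sum.inr 1)
    (hσ1 : σ' (Sum.inr 1) = Sum.inl (σ p))
    (hσz : ∀ z : E, z ≠ p → σ' (Sum.inl z) = Sum.inl (σ z))
    (hτ0 : τ' (Sum.inr 0) = Sum.inr 1)
    (hτ1 : τ' (Sum.inr 1) = Sum.inr 0)
    (hτz : ∀ z : E, τ' (Sum.inl z) = Sum.inl (τ z))
    (hτ' : ∀ x : E ⊕ Fin 2, τ' (τ' x) = x) (hτ'fix : ∀ x : E ⊕ Fin 2, τ' x ≠ x)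
    (hε'z : ∀ z : E, ε' (Sum.inl z) = ε z)
    (hε'new : ∀ i : Fin 2, ε' (Sum.inr i) = s)
    (hε' : ∀ x : E ⊕ Fin 2, ε' (τ' x) = ε' x) :
    (s = true →
      kauffman σ' τ' ε' hτ' hε' = (-(T 3)) * kauffman σ τ ε hτ hε) ∧
    (s = false →
      kauffman σ' τ' ε' hτ' hε' = (-(T (-3))) * kauffman σ τ ε hτ hε) := by
  have stateEq : ∀ (m : E → Bool) (c : Bool), (∀ x, m (τ x) = m x) →
      ∀ x, Sum.elim m (fun _ => c) (τ' x) = Sum.elim m (fun _ => c) x := by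
    intro m c hm x
    cases x with
    | inl z => rw [hτz]; simp [hm]
    | inr i =>
      fin_cases i <;> simp only [Fin.zero_eta, Fin.mk_one]
      · rw [hτ0]; rfl
      · rw [hτ1]; rfl
  let e : ({m : E → Bool // ∀ x, m (τ x) = m x} × Bool) ≃
      {m' : E ⊕ Fin 2 → Bool // ∀ x, m' (τ' x) = m' x} :=
  { toFun := fun q => ⟨Sum.elim q.1.1 (fun _ => q.2), stateEq q.1.1 q.2 q.1.2⟩
    invFun := fun m' => (⟨fun z => m'.1 (Sum.inl z), fun z => by
        have := m'.2 (Sum.inl z); rwa [hτz] at this⟩, m'.1 (Sum.inr 0))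
    left_inv := fun q => rfl
    right_inv := fun m' => by
      refine Subtype.ext (funext fun x => ?_)
      cases x with
      | inl z => rfl
      | inr i =>
        fin_cases i <;> simp only [Fin.zero_eta, Fin.mk_one, Sum.elim_inr] <;>
          first
            | rfl
            | (have := m'.2 (Sum.inr 0); rw [hτ0] at this; exact this.symm)
      }
  have key : kauffman σ' τ' ε' hτ' hε' =
      (if s then -(T 3) else -(T (-3))) * kauffman σ τ ε hτ hε := by
    have step1 : kauffman σ' τ' ε' hτ' hε' =
        ∑ q : {m : E → Bool // ∀ x, m (τ x) = m x} × Bool,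
          T ((aCount (Sum.elim q.1.1 fun _ : Fin 2 => q.2) : ℤ) -
              (bCount (Sum.elim q.1.1 fun _ : Fin 2 => q.2) : ℤ)) *
            (-(T 2) - T (-2)) ^
              (numComponents σ' τ' ε' (Sum.elim q.1.1 fun _ : Fin 2 => q.2) hτ' hε'
                (stateEq q.1.1 q.2 q.1.2)) := by
      unfold kauffman
      refine (Fintype.sum_equiv e _ _ fun q => ?_).symm
      rfl
    rw [step1]
    unfold kauffman
    rw [Fintype.sum_prod_type, Finset.mul_sum]
    apply Finset.sum_congr rfl
    intro mq _
    rw [Fintype.sum_bool]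
    rw [aCount_elim, aCount_elim, bCount_elim, bCount_elim]
    rw [comp_insert σ τ ε hτ hε p s σ' τ' ε' hσp hσ0 hσ1 hσz hτ0 hτ1 hτz hτ' hε'z hε'new hε'
        mq.1 mq.2 true (stateEq mq.1 true mq.2),
      comp_insert σ τ ε hτ hε p s σ' τ' ε' hσp hσ0 hσ1 hσz hτ0 hτ1 hτz hτ' hε'z hε'new hε'
        mq.1 mq.2 false (stateEq mq.1 false mq.2)]
    have exp1 : ((aCount mq.1 + 1 : ℕ) : ℤ) - ((bCount mq.1 + 0 : ℕ) : ℤ) =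
        ((aCount mq.1 : ℤ) - (bCount mq.1 : ℤ)) + 1 := by push_cast; ring
    have exp2 : ((aCount mq.1 + 0 : ℕ) : ℤ) - ((bCount mq.1 + 1 : ℕ) : ℤ) =
        ((aCount mq.1 : ℤ) - (bCount mq.1 : ℤ)) + (-1) := by push_cast; ring
    simp only [reduceIte, Bool.false_eq_true, if_false, if_true]
    rw [exp1, exp2, T_add, T_add]
    cases s
    · simp only [reduceIte, Bool.true_eq_false, Bool.false_eq_true, if_false, if_true, pow_succ, pow_zero, add_zero, mul_one]
      rw [← bracket_factor_neg]
      ring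
    · simp only [reduceIte, Bool.true_eq_false, Bool.false_eq_true, if_false, if_true, pow_succ, pow_zero, add_zero, mul_one]
      rw [← bracket_factor_pos]
      ring
  constructor
  · intro hs; subst hs; simpa using key
  · intro hs; subst hs; simpa using key
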